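/- Let k have characteristic zero, s ∈ k[x_1,…,x_n] a nonzero polynomial, and F = s·y ∈ k[x_1,…,x_n,y]. Then the kernel of the operator ∂/∂y + s on k[x_1,…,x_n,y] is zero, and its cokernel is isomorphic, as a k[x_1,…,x_n]-module, to k[x_1,…,x_n][1/s] / k[x_1,…,x_n]. -/

import Mathlib

open Polynomial

namespace DworkAux

set_option linter.unusedSectionVars false
set_option maxHeartbeats 1000000
set_option synthInstance.maxHeartbeats 1000000

variable {k : Type} [Field k] [CharZero k] {n : ℕ}

local notation "R" => MvPolynomial (Fin n) k

variable (s : MvPolynomial (Fin n) k)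

local notation "A" => Localization.Away s

noncomputable def cc (m : ℕ) : Localization.Away s :=
  (-1 : Localization.Away s) ^ m * (m.factorial : Localization.Away s) *
    IsLocalization.Away.invSelf s ^ (m + 1)

noncomputable def phi : Polynomial (MvPolynomial (Fin n) k) →ₗ[MvPolynomial (Fin n) k]
    Localization.Away s where
  toFun p := p.sum fun m a => algebraMap R A a * cc s m
  map_add' p q := Polynomial.sum_add_index p q _ (by simp) (by intro a b₁ b₂; rw [map_add, add_mul])
  map_smul' r p := by
    rw [RingHom.id_apply, Polynomial.sum_smul_index _ _ _ (by simp)]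
    simp only [Polynomial.sum, map_mul]
    rw [show ∀ x : Localization.Away s, r • x = algebraMap R A r * x from fun x => Algebra.smul_def r x,
      Finset.mul_sum]
    simp only [mul_assoc]

lemma phi_monomial (m : ℕ) (a : MvPolynomial (Fin n) k) :
    phi s (monomial m a) = algebraMap R A a * cc s m := by
  show (monomial m a).sum (fun m a => algebraMap R A a * cc s m) = _
  exact Polynomial.sum_monomial_index a _ (by simp)

lemma phi_apply (p : Polynomial (MvPolynomial (Fin n) k)) :
    phi s p = ∑ m ∈ p.support, algebraMap R A (p.coeff m) * cc s m := rfl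

lemma pow_mul_invSelf (j : ℕ) :
    algebraMap R A (s ^ j) * IsLocalization.Away.invSelf s ^ j = 1 := by
  rw [map_pow, ← mul_pow, IsLocalization.Away.mul_invSelf, one_pow]

lemma phi_L (p : Polynomial (MvPolynomial (Fin n) k)) :
    phi s (derivative p + C s * p) = algebraMap R A (p.coeff 0) := by
  induction p using Polynomial.induction_on' with
  | add p q hp hq =>
      have e : derivative (p + q) + C s * (p + q)
          = (derivative p + C s * p) + (derivative q + C s * q) := by
        rw [derivative_add]; ring
      rw [e, map_add, hp, hq, coeff_add, map_add]
  | monomial m a =>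
      rw [derivative_monomial, C_mul_monomial, map_add, phi_monomial, phi_monomial]
      cases m with
      | zero =>
          simp only [Nat.cast_zero, mul_zero, map_zero, zero_mul, zero_add, cc, pow_zero,
            pow_one, Nat.factorial_zero, Nat.cast_one, one_mul, map_mul, coeff_monomial,
            if_pos rfl]
          rw [mul_comm ((algebraMap R A) s), mul_assoc, IsLocalization.Away.mul_invSelf, mul_one]
          simp
      | succ j =>
          have h := IsLocalization.Away.mul_invSelf (S := Localization.Away s) s
          simp only [cc, Nat.succ_sub_one, coeff_monomial, map_mul, map_natCast,
            if_neg (Nat.succ_ne_zero j), map_zero]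
          push_cast [Nat.factorial_succ]
          linear_combination (algebraMap R A a * (-1 : Localization.Away s) ^ (j + 1) *
            ((j + 1 : Localization.Away s) * (j.factorial : Localization.Away s)) *
            IsLocalization.Away.invSelf s ^ (j + 1)) * h


lemma phi_surj (a : Localization.Away s) :
    ∃ p r, phi s p = a + algebraMap R A r := by
  obtain ⟨⟨r, sc⟩, h⟩ := IsLocalization.surj (Submonoid.powers s) a
  obtain ⟨e, he⟩ := sc.2
  have ha : a = algebraMap R A r * IsLocalization.Away.invSelf s ^ e := by
    have h2 := congrArg (· * IsLocalization.Away.invSelf s ^ e) h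
    simp only at h2
    rw [show ((sc : MvPolynomial (Fin n) k)) = s ^ e from he.symm] at h2
    rw [mul_assoc, pow_mul_invSelf, mul_one] at h2
    exact h2
  cases e with
  | zero =>
      exact ⟨0, -r, by simp [ha, map_zero]⟩
  | succ m =>
      refine ⟨monomial m (r * ((-1) ^ m * MvPolynomial.C ((m.factorial : k)⁻¹))), 0, ?_⟩
      rw [phi_monomial, ha, map_zero, add_zero, cc]
      have h1 : algebraMap R A (MvPolynomial.C ((m.factorial : k)⁻¹)) *
          (m.factorial : Localization.Away s) = 1 := by
        rw [show ((m.factorial : ℕ) : Localization.Away s)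
            = algebraMap R A ((m.factorial : ℕ) : MvPolynomial (Fin n) k) by
          rw [map_natCast]]
        rw [show ((m.factorial : ℕ) : MvPolynomial (Fin n) k)
            = MvPolynomial.C ((m.factorial : k)) by rw [map_natCast]]
        rw [← map_mul, ← map_mul, inv_mul_cancel₀
          (Nat.cast_ne_zero.mpr m.factorial_ne_zero), map_one, map_one]
      have h2 : (-1 : Localization.Away s) ^ m * (-1) ^ m = 1 := by
        rw [← mul_pow]; norm_num
      simp only [map_mul, map_pow, map_neg, map_one]
      linear_combination (algebraMap R A r * (-1 : Localization.Away s) ^ m * (-1) ^ m *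
          IsLocalization.Away.invSelf s ^ (m + 1)) * h1 +
        (algebraMap R A r * IsLocalization.Away.invSelf s ^ (m + 1)) * h2

lemma dvd_leadingCoeff (hs : s ≠ 0) (p : Polynomial (MvPolynomial (Fin n) k)) (hp : p ≠ 0)
    (r : MvPolynomial (Fin n) k) (h : phi s p = algebraMap R A r) :
    s ∣ p.coeff p.natDegree := by
  set D := p.natDegree with hD
  have hinj : Function.Injective (algebraMap R A) :=
    IsLocalization.injective _ (powers_le_nonZeroDivisors_of_noZeroDivisors hs)
  have hsum : (∑ m ∈ p.support,
      p.coeff m * (-1) ^ m * (m.factorial : MvPolynomial (Fin n) k) * s ^ (D - m))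
      = r * s ^ (D + 1) := by
    apply hinj
    rw [map_sum]
    have hterm : ∀ m ∈ p.support,
        algebraMap R A (p.coeff m * (-1) ^ m * (m.factorial : MvPolynomial (Fin n) k)
          * s ^ (D - m))
        = algebraMap R A (p.coeff m) * cc s m * algebraMap R A (s ^ (D + 1)) := by
      intro m hm
      have hmD : m ≤ D := Polynomial.le_natDegree_of_mem_supp m hm
      have hsplit : s ^ (D + 1) = s ^ (m + 1) * s ^ (D - m) := by
        rw [← pow_add]; congr 1; omega
      rw [hsplit, cc]
      have h1 := pow_mul_invSelf s (m + 1)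
      rw [map_pow] at h1
      simp only [map_mul, map_pow, map_neg, map_one, map_natCast]
      linear_combination (-(algebraMap R A (p.coeff m) * (-1 : Localization.Away s) ^ m *
        (m.factorial : Localization.Away s) * algebraMap R A s ^ (D - m))) * h1
    rw [Finset.sum_congr rfl hterm, ← Finset.sum_mul, ← phi_apply, h, ← map_mul]
  have hDsupp : D ∈ p.support := Polynomial.natDegree_mem_support_of_nonzero hp
  have hkey : p.coeff D * (-1) ^ D * (D.factorial : MvPolynomial (Fin n) k)
      = r * s ^ (D + 1) - ∑ m ∈ p.support.erase D,
        p.coeff m * (-1) ^ m * (m.factorial : MvPolynomial (Fin n) k) * s ^ (D - m) := by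
    rw [eq_sub_iff_add_eq, ← hsum, ← Finset.add_sum_erase p.support _ hDsupp]
    simp [Nat.sub_self]
  have hdvd2 : s ∣ p.coeff D * ((-1) ^ D * (D.factorial : MvPolynomial (Fin n) k)) := by
    rw [← mul_assoc, hkey]
    apply dvd_sub
    · exact Dvd.dvd.mul_left (dvd_pow_self s (Nat.succ_ne_zero D)) r
    · apply Finset.dvd_sum
      intro m hm
      have hmne : m ≠ D := Finset.ne_of_mem_erase hm
      have hmD : m ≤ D := Polynomial.le_natDegree_of_mem_supp m (Finset.mem_of_mem_erase hm)
      exact Dvd.dvd.mul_left (dvd_pow_self s (by omega)) _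
  have hu : IsUnit ((-1 : MvPolynomial (Fin n) k) ^ D
      * (D.factorial : MvPolynomial (Fin n) k)) := by
    apply IsUnit.of_mul_eq_one ((-1) ^ D * MvPolynomial.C ((D.factorial : k)⁻¹))
    have h1 : (D.factorial : MvPolynomial (Fin n) k)
        * MvPolynomial.C ((D.factorial : k)⁻¹) = 1 := by
      rw [show ((D.factorial : ℕ) : MvPolynomial (Fin n) k)
          = MvPolynomial.C ((D.factorial : k)) by rw [map_natCast]]
      rw [← map_mul, mul_inv_cancel₀ (Nat.cast_ne_zero.mpr D.factorial_ne_zero), map_one]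
    have h2 : (-1 : MvPolynomial (Fin n) k) ^ D * (-1) ^ D = 1 := by
      rw [← mul_pow]; norm_num
    linear_combination ((-1 : MvPolynomial (Fin n) k) ^ D * (-1) ^ D) * h1 + h2
  exact (IsUnit.dvd_mul_right hu).mp hdvd2


lemma reduce_step (hs : s ≠ 0) (p : Polynomial (MvPolynomial (Fin n) k)) (hp : p ≠ 0)
    (r : MvPolynomial (Fin n) k) (h : phi s p = algebraMap R A r) :
    ∃ b, ∀ j, p.natDegree ≤ j →
      (p - (derivative (monomial p.natDegree b) + C s * monomial p.natDegree b)).coeff j = 0 := by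
  obtain ⟨b, hb⟩ := dvd_leadingCoeff s hs p hp r h
  refine ⟨b, fun j hj => ?_⟩
  simp only [coeff_sub, coeff_add, derivative_monomial, Polynomial.coeff_C_mul, coeff_monomial]
  have hder : (if p.natDegree - 1 = j then b * (p.natDegree : MvPolynomial (Fin n) k) else 0)
      = 0 := by
    rcases Nat.eq_zero_or_pos p.natDegree with h0 | h0
    · simp [h0]
    · rw [if_neg (by omega)]
  rw [hder]
  rcases eq_or_lt_of_le hj with heq | hlt
  · rw [if_pos heq, ← heq, hb]; ring
  · rw [if_neg (by omega), mul_zero, coeff_eq_zero_of_natDegree_lt hlt]; ring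

lemma exists_preimage (hs : s ≠ 0) :
    ∀ d (p : Polynomial (MvPolynomial (Fin n) k)), p.natDegree ≤ d →
      ∀ r, phi s p = algebraMap R A r → ∃ q, derivative q + C s * q = p := by
  intro d
  induction d with
  | zero =>
      intro p hdeg r h
      by_cases hp : p = 0
      · exact ⟨0, by simp [hp]⟩
      obtain ⟨b, hb⟩ := reduce_step s hs p hp r h
      refine ⟨monomial p.natDegree b, ?_⟩
      have h0 : p - (derivative (monomial p.natDegree b) + C s * monomial p.natDegree b) = 0 := by
        refine Polynomial.ext fun j => ?_
        simpa using hb j (by omega)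
      exact (sub_eq_zero.mp h0).symm
  | succ d ih =>
      intro p hdeg r h
      by_cases hp : p = 0
      · exact ⟨0, by simp [hp]⟩
      obtain ⟨b, hb⟩ := reduce_step s hs p hp r h
      set q0 := monomial p.natDegree b with hq0
      set p1 := p - (derivative q0 + C s * q0) with hp1
      by_cases hz : p1 = 0
      · exact ⟨q0, (sub_eq_zero.mp hz).symm⟩
      · have hdeg1 : p1.natDegree ≤ d := by
          rcases lt_or_ge p1.natDegree p.natDegree with hlt | hge
          · omega
          · have hc := hb p1.natDegree hge
            exact absurd (by rwa [← Polynomial.leadingCoeff, Polynomial.leadingCoeff_eq_zero]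
              at hc) hz
        have hphi1 : phi s p1 = algebraMap R A (r - q0.coeff 0) := by
          rw [hp1, map_sub, h, phi_L, map_sub]
        obtain ⟨q1, hq1⟩ := ih p1 hdeg1 _ hphi1
        refine ⟨q0 + q1, ?_⟩
        have he : derivative (q0 + q1) + C s * (q0 + q1)
            = (derivative q0 + C s * q0) + (derivative q1 + C s * q1) := by
          rw [derivative_add]; ring
        rw [he, hq1, hp1]; ring

end DworkAux

/- STATEMENT 14 (rank-one Dwork comparison): for k of characteristic zero and
0 ≠ s ∈ R = k[x₁,…,xₙ], the operator ∂_y + s on R[y] (the relative de Rham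
differential of the exponential module D e^{s·y}) has zero kernel, and its
cokernel is isomorphic as an R-module to R[1/s]/R. -/
set_option maxHeartbeats 1000000 in
set_option synthInstance.maxHeartbeats 1000000 in
theorem dwork_rank_one (k : Type) [Field k] [CharZero k] (n : ℕ)
    (s : MvPolynomial (Fin n) k) (hs : s ≠ 0) :
    LinearMap.ker
        ((Polynomial.derivative : Polynomial (MvPolynomial (Fin n) k)
            →ₗ[MvPolynomial (Fin n) k] Polynomial (MvPolynomial (Fin n) k))
          + LinearMap.mulLeft (MvPolynomial (Fin n) k) (C s)) = ⊥ ∧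
    Nonempty
      ((Polynomial (MvPolynomial (Fin n) k) ⧸ LinearMap.range
          ((Polynomial.derivative : Polynomial (MvPolynomial (Fin n) k)
              →ₗ[MvPolynomial (Fin n) k] Polynomial (MvPolynomial (Fin n) k))
            + LinearMap.mulLeft (MvPolynomial (Fin n) k) (C s)))
        ≃ₗ[MvPolynomial (Fin n) k]
       (Localization.Away s ⧸ LinearMap.range
          (Algebra.linearMap (MvPolynomial (Fin n) k) (Localization.Away s)))) := by
  constructor
  · rw [eq_bot_iff]
    intro p hp
    simp only [LinearMap.mem_ker, LinearMap.add_apply, LinearMap.mulLeft_apply] at hp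
    simp only [Submodule.mem_bot]
    by_contra hp0
    have h1 : (derivative p + C s * p).coeff p.natDegree = 0 := by rw [hp]; simp
    rw [coeff_add, coeff_derivative, Polynomial.coeff_C_mul,
      coeff_eq_zero_of_natDegree_lt (lt_add_one p.natDegree), zero_mul, zero_add] at h1
    have h2 : p.coeff p.natDegree = 0 := by
      rcases mul_eq_zero.mp h1 with h | h
      · exact absurd h hs
      · exact h
    exact hp0 (Polynomial.leadingCoeff_eq_zero.mp (by rwa [Polynomial.leadingCoeff]))
  · set i := Algebra.linearMap (MvPolynomial (Fin n) k) (Localization.Away s) with hi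
    set Φ := (Submodule.mkQ (LinearMap.range i)).comp (DworkAux.phi s) with hΦ
    have hsurj : Function.Surjective Φ := by
      intro x
      obtain ⟨a, rfl⟩ := Submodule.mkQ_surjective _ x
      obtain ⟨p, r, hpr⟩ := DworkAux.phi_surj s a
      refine ⟨p, ?_⟩
      simp only [hΦ, LinearMap.comp_apply, Submodule.mkQ_apply, hpr]
      rw [Submodule.Quotient.eq]
      refine ⟨r, ?_⟩
      simp [hi]
    have hker : LinearMap.ker Φ = LinearMap.range
        ((Polynomial.derivative : Polynomial (MvPolynomial (Fin n) k)
            →ₗ[MvPolynomial (Fin n) k] Polynomial (MvPolynomial (Fin n) k))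
          + LinearMap.mulLeft (MvPolynomial (Fin n) k) (C s)) := by
      ext p
      simp only [LinearMap.mem_ker, hΦ, LinearMap.comp_apply, Submodule.mkQ_apply,
        Submodule.Quotient.mk_eq_zero, LinearMap.mem_range]
      constructor
      · rintro ⟨r, hr⟩
        have hr' : DworkAux.phi s p
            = algebraMap (MvPolynomial (Fin n) k) (Localization.Away s) r := by
          rw [← hr]; simp [hi]
        obtain ⟨q, hq⟩ := DworkAux.exists_preimage s hs p.natDegree p le_rfl r hr'
        exact ⟨q, by simpa [LinearMap.add_apply, LinearMap.mulLeft_apply] using hq⟩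
      · rintro ⟨q, rfl⟩
        refine ⟨q.coeff 0, ?_⟩
        have hLq : ((Polynomial.derivative : Polynomial (MvPolynomial (Fin n) k)
            →ₗ[MvPolynomial (Fin n) k] Polynomial (MvPolynomial (Fin n) k))
          + LinearMap.mulLeft (MvPolynomial (Fin n) k) (C s)) q
            = derivative q + C s * q := by
          simp [LinearMap.add_apply, LinearMap.mulLeft_apply]
        rw [hLq, DworkAux.phi_L]
        simp [hi]
    exact ⟨(Submodule.quotEquivOfEq _ _ hker.symm).trans (Φ.quotKerEquivOfSurjective hsurj)⟩
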